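/- The joint distribution of the pair of statistics (returns(D), n − ldr(D)) over Dyck paths of semilength n is symmetric: the number of Dyck paths D of semilength n with returns(D) = a and n − ldr(D) = b equals the number with returns(D) = b and n − ldr(D) = a. -/

import Mathlib

/-!
Dyck paths are encoded as lists of booleans: `true` is a north step `(0,1)`,
`false` is an east step `(1,0)`.  A Dyck path of semilength `n` goes from
`(0,0)` to `(n,n)` staying weakly above the diagonal `y = x`.
-/

/-- `D` is a Dyck word: every prefix has at least as many north steps as east
steps, and the total numbers agree. -/
def isDyck (D : List Bool) : Bool :=
  ((List.range (D.length + 1)).all fun k =>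
    (D.take k).count false ≤ (D.take k).count true) &&
  (D.count true == D.count false)

/-- The (finite) set of Dyck paths of semilength `n`. -/
def dyckPaths (n : ℕ) : Finset (List Bool) :=
  ((List.replicate n true ++ List.replicate n false).permutations.filter isDyck).toFinset

/-- The number of returns: east steps ending on the diagonal `y = x`. -/
def returns (D : List Bool) : ℕ :=
  ((List.range D.length).filter fun i =>
    (D[i]? == some false) &&
    ((D.take (i + 1)).count true == (D.take (i + 1)).count false)).length

/-- `ldr D`: the `y`-coordinate of the midpoint of the last double rise
(last pair of consecutive north steps), `0` if there is no double rise. -/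
def ldr (D : List Bool) : ℕ :=
  match ((List.range D.length).filter fun i =>
      (D[i]? == some true) && (D[i+1]? == some true)).getLast? with
  | some i => (D.take (i + 1)).count true
  | none => 0

/-- The set of `x`-coordinates (plus 1) of the north steps of `D`. -/
def rises (D : List Bool) : Finset ℕ :=
  (((List.range D.length).filter fun i => D[i]? == some true).map
    fun i => (D.take i).count false + 1).toFinset

/-- The multiset of `x`-coordinates (plus 1) of the north steps of `D`. -/
def risesM (D : List Bool) : Multiset ℕ :=
  ↑(((List.range D.length).filter fun i => D[i]? == some true).map
    fun i => (D.take i).count false + 1)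

/-- `D` ends with a single east step: its last maximal run of east steps has
length one, i.e. `D` ends with a north step followed by one east step. -/
def EndsSingleEast (D : List Bool) : Prop :=
  ∃ P, D = P ++ [true, false]

/-- `R` contains only single rises: no two consecutive north steps. -/
def SingleRises (R : List Bool) : Prop :=
  ∀ i, ¬ (R[i]? = some true ∧ R[i+1]? = some true)

/-- A prime Dyck path: a Dyck path whose only return is its final east step. -/
def IsPrimeDyck (Q : List Bool) : Prop :=
  isDyck Q = true ∧ Q ≠ [] ∧ returns Q = 1

/-- Concatenation `n₀ Q₁ n₁ Q₂ ⋯` of runs of north steps and paths, encoded as a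
list of pairs `(nᵢ₋₁, Qᵢ)`. -/
def primeBlocks (l : List (ℕ × List Bool)) : List Bool :=
  (l.map fun p => List.replicate p.1 true ++ p.2).flatten


inductive BT where
  | nil : BT
  | node : BT → BT → BT

namespace BT

def size : BT → ℕ
  | .nil => 0
  | .node a b => size a + size b + 1

def Rst : BT → ℕ
  | .nil => 0
  | .node _ b => Rst b + 1

def Sst : BT → ℕ
  | .nil => 0
  | .node .nil b => Sst b + 1
  | .node (.node x y) _ => Sst (.node x y)

def beta : BT → BT × BT
  | .nil => (.nil, .nil)
  | .node .nil .nil => (.nil, .nil)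
  | .node .nil (.node x y) => ((.nil : BT), .node (beta (.node x y)).1 (beta (.node x y)).2)
  | .node (.node x y) b => (.node (beta (.node x y)).1 b, (beta (.node x y)).2)

def betainv : BT → BT → BT
  | .nil, .nil => .node .nil .nil
  | .nil, .node c1 b2 => .node .nil (betainv c1 b2)
  | .node c1 bb, b => .node (betainv c1 b) bb

def psi : BT → BT
  | .nil => .nil
  | .node .nil b => .node .nil (psi b)
  | .node (.node x y) b =>
      .node (betainv (beta (.node x y)).1 b) (beta (.node x y)).2

lemma betainv_ne_nil (c b : BT) : betainv c b ≠ .nil := by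
  cases c <;> cases b <;> simp [betainv]

lemma beta_betainv (c b : BT) : beta (betainv c b) = (c, b) := by
  induction c, b using betainv.induct with
  | case1 => simp [betainv, beta]
  | case2 c1 b2 ih =>
      cases hb : betainv c1 b2 with
      | nil => exact absurd hb (betainv_ne_nil c1 b2)
      | node x y =>
          simp only [betainv]
          rw [hb]
          simp only [beta]
          rw [← hb, ih]
  | case3 c1 bb b ih =>
      cases hb : betainv c1 b with
      | nil => exact absurd hb (betainv_ne_nil c1 b)
      | node x y =>
          simp only [betainv]
          rw [hb]
          simp only [beta]
          rw [← hb, ih]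

lemma betainv_beta (a : BT) (h : a ≠ .nil) :
    betainv (beta a).1 (beta a).2 = a := by
  induction a using beta.induct with
  | case1 => simp at h
  | case2 => simp [beta, betainv]
  | case3 x y ih => simp [beta, betainv, ih]
  | case4 x y b ih => simp [beta, betainv, ih]

lemma size_betainv (c b : BT) : size (betainv c b) = 1 + size c + size b := by
  induction c, b using betainv.induct with
  | case1 => simp [betainv, size]
  | case2 c1 b2 ih => simp [betainv, size, ih]; ring
  | case3 c1 bb b ih => simp [betainv, size, ih]; ring

lemma Sst_betainv (c b : BT) : Sst (betainv c b) = Rst b + 1 := by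
  induction c, b using betainv.induct with
  | case1 => simp [betainv, Sst, Rst]
  | case2 c1 b2 ih =>
      cases hb : betainv c1 b2 with
      | nil => exact absurd hb (betainv_ne_nil c1 b2)
      | node x y =>
          simp only [betainv]
          rw [hb]
          simp only [Sst, Rst]
          rw [← hb, ih]
  | case3 c1 bb b ih =>
      cases hb : betainv c1 b with
      | nil => exact absurd hb (betainv_ne_nil c1 b)
      | node x y =>
          simp only [betainv]
          rw [hb]
          simp only [Sst]
          rw [← hb, ih]

lemma size_beta (a : BT) (h : a ≠ .nil) :
    1 + size (beta a).1 + size (beta a).2 = size a := by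
  conv_rhs => rw [← betainv_beta a h]
  rw [size_betainv]

lemma Rst_beta (a : BT) (h : a ≠ .nil) : Rst (beta a).2 + 1 = Sst a := by
  conv_rhs => rw [← betainv_beta a h]
  rw [Sst_betainv]

lemma psi_Rst (f : BT) : Rst (psi f) = Sst f := by
  induction f using psi.induct with
  | case1 => simp [psi, Rst, Sst]
  | case2 b ih => simp [psi, Rst, Sst, ih]
  | case3 x y b => simp [psi, Rst, Sst, Rst_beta (BT.node x y) (by simp)]

lemma psi_Sst (f : BT) : Sst (psi f) = Rst f := by
  induction f using psi.induct with
  | case1 => simp [psi, Rst, Sst]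
  | case2 b ih => simp [psi, Rst, Sst, ih]
  | case3 x y b =>
      cases hb : betainv (beta (BT.node x y)).1 b with
      | nil => exact absurd hb (betainv_ne_nil _ b)
      | node u v =>
          simp only [psi]
          rw [hb]
          simp only [Sst]
          rw [← hb, Sst_betainv]
          simp [Rst]

lemma psi_size (f : BT) : size (psi f) = size f := by
  induction f using psi.induct with
  | case1 => simp [psi]
  | case2 b ih => simp [psi, size, ih]
  | case3 x y b =>
      have h1 := size_beta (BT.node x y) (by simp)
      simp only [psi, size, size_betainv]
      simp only [size] at h1
      omega

lemma psi_psi (f : BT) : psi (psi f) = f := by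
  induction f using psi.induct with
  | case1 => simp [psi]
  | case2 b ih => simp [psi, ih]
  | case3 x y b =>
      cases hb : betainv (beta (BT.node x y)).1 b with
      | nil => exact absurd hb (betainv_ne_nil _ b)
      | node u v =>
          simp only [psi]
          rw [hb]
          simp only [psi]
          rw [← hb, beta_betainv]
          simp [betainv_beta (BT.node x y) (by simp)]

end BT

namespace DyckSym

/-- The Dyck property as a Prop. -/
def Dyk (D : List Bool) : Prop :=
  (∀ k, (D.take k).count false ≤ (D.take k).count true) ∧ D.count true = D.count false

/-- predicate for returns -/
def rp (D : List Bool) (i : ℕ) : Bool :=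
  (D[i]? == some false) && ((D.take (i + 1)).count true == (D.take (i + 1)).count false)

/-- predicate for double rises -/
def q (D : List Bool) (i : ℕ) : Bool :=
  (D[i]? == some true) && (D[i+1]? == some true)

def HasUU (D : List Bool) : Prop := ∃ i, q D i = true

lemma returns_spec (D : List Bool) :
    returns D = ((List.range D.length).filter (rp D)).length := rfl

lemma ldr_spec (D : List Bool) :
    ldr D = match ((List.range D.length).filter (q D)).getLast? with
      | some i => (D.take (i + 1)).count true
      | none => 0 := rfl

lemma ldr_of_getLast? {D : List Bool} {i : ℕ}
    (h : ((List.range D.length).filter (q D)).getLast? = some i) :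
    ldr D = (D.take (i + 1)).count true := by
  rw [ldr_spec, h]

lemma ldr_of_none {D : List Bool}
    (h : ((List.range D.length).filter (q D)).getLast? = none) :
    ldr D = 0 := by
  rw [ldr_spec, h]

lemma q_false_of_ge {D : List Bool} {i : ℕ} (h : D.length ≤ i + 1) :
    q D i = false := by
  have : D[i+1]? = none := by
    rw [List.getElem?_eq_none_iff]
    exact h
  simp [q, this]

lemma ldr_no_uu {D : List Bool} (h : ¬ HasUU D) : ldr D = 0 := by
  apply ldr_of_none
  rw [List.getLast?_eq_none_iff, List.filter_eq_nil_iff]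
  intro a _ ha
  exact h ⟨a, ha⟩

lemma ldr_le_count (D : List Bool) : ldr D ≤ D.count true := by
  rw [ldr_spec]
  cases h : ((List.range D.length).filter (q D)).getLast? with
  | none => simp
  | some i =>
      simpa using (List.take_sublist (i+1) D).count_le true

/-- splitting the range-filter of an appended list -/
lemma filter_q_append (X Y : List Bool) :
    (List.range (X ++ Y).length).filter (q (X ++ Y)) =
      (List.range X.length).filter (q (X ++ Y)) ++
      (List.filter (q Y) (List.range Y.length)).map (X.length + ·) := by
  rw [List.length_append, List.range_add, List.filter_append, List.filter_map]
  congr 1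
  congr 1
  apply List.filter_congr
  intro j _
  show q (X ++ Y) (X.length + j) = q Y j
  unfold q
  have h1 : (X ++ Y)[X.length + j]? = Y[j]? := by
    rw [List.getElem?_append_right (by omega)]
    congr 1
    omega
  have h2 : (X ++ Y)[X.length + j + 1]? = Y[j+1]? := by
    rw [List.getElem?_append_right (by omega)]
    congr 1
    omega
  rw [h1, h2]

lemma q_append_left {X : List Bool} (Y : List Bool) {i : ℕ} (h : i + 1 < X.length) :
    q (X ++ Y) i = q X i := by
  unfold q
  rw [List.getElem?_append_left (by omega), List.getElem?_append_left h]

/-- LDRb : if Y has a double rise, ldr (X ++ Y) = count true X + ldr Y -/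
lemma ldr_append_hasUU (X : List Bool) {Y : List Bool} (h : HasUU Y) :
    ldr (X ++ Y) = X.count true + ldr Y := by
  obtain ⟨j, hj⟩ := h
  have hjlen : j < Y.length := by
    have : Y[j]? = some true := by
      have := hj; unfold q at this
      exact (beq_iff_eq.mp (Bool.and_elim_left this))
    exact (List.getElem?_eq_some_iff.mp this).1
  have hne : (List.range Y.length).filter (q Y) ≠ [] := by
    intro hc
    rw [List.filter_eq_nil_iff] at hc
    exact hc j (List.mem_range.mpr hjlen) hj
  cases hY : ((List.range Y.length).filter (q Y)).getLast? with
  | none => exact absurd (List.getLast?_eq_none_iff.mp hY) hne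
  | some i =>
      have hi : i ∈ (List.range Y.length).filter (q Y) := List.mem_of_getLast? hY
      have hilen : i < Y.length := List.mem_range.mp (List.mem_filter.mp hi).1
      have hfull : ((List.range (X ++ Y).length).filter (q (X ++ Y))).getLast?
          = some (X.length + i) := by
        rw [filter_q_append, List.getLast?_append, List.getLast?_map, hY]
        simp
      rw [ldr_of_getLast? hfull, ldr_of_getLast? hY]
      have htake : (X ++ Y).take (X.length + i + 1) = X ++ Y.take (i + 1) := by
        rw [show X.length + i + 1 = X.length + (i + 1) by omega, List.take_add,
          List.take_left, List.drop_left]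
      rw [htake, List.count_append]

/-- LDRc : junction double rise, no double rise inside Y -/
lemma ldr_append_junction {X Y : List Bool} (hX : X.getLast? = some true)
    (hY : Y.head? = some true) (hno : ¬ HasUU Y) :
    ldr (X ++ Y) = X.count true := by
  have hXne : X ≠ [] := by intro hc; rw [hc] at hX; simp at hX
  obtain ⟨m, hm⟩ : ∃ m, X.length = m + 1 :=
    ⟨X.length - 1, by have := List.length_pos_iff.mpr hXne; omega⟩
  have hqm : q (X ++ Y) m = true := by
    unfold q
    have h1 : (X ++ Y)[m]? = some true := by
      rw [List.getElem?_append_left (by omega)]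
      rw [List.getLast?_eq_getElem?, hm] at hX
      simpa using hX
    have h2 : (X ++ Y)[m+1]? = some true := by
      rw [List.getElem?_append_right (by omega), hm]
      simpa [List.head?_eq_getElem?] using hY
    rw [h1, h2]; rfl
  have h2 : (List.range Y.length).filter (q Y) = [] := by
    rw [List.filter_eq_nil_iff]; intro a _ ha; exact hno ⟨a, ha⟩
  have hfull : ((List.range (X ++ Y).length).filter (q (X ++ Y))).getLast?
      = some m := by
    rw [filter_q_append, h2]
    simp only [List.map_nil, List.append_nil]
    rw [hm, List.range_succ, List.filter_append]
    simp [hqm]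
  rw [ldr_of_getLast? hfull]
  rw [List.take_append_of_le_length (by omega), show m + 1 = X.length from hm.symm,
    List.take_length]

/-- LDRd : no double rise in Y and no junction double rise -/
lemma ldr_append_none {X Y : List Bool}
    (hjunc : ¬ (X.getLast? = some true ∧ Y.head? = some true))
    (hno : ¬ HasUU Y) :
    ldr (X ++ Y) = ldr X := by
  have h2 : (List.range Y.length).filter (q Y) = [] := by
    rw [List.filter_eq_nil_iff]; intro a _ ha; exact hno ⟨a, ha⟩
  have hcongr : (List.range X.length).filter (q (X ++ Y)) =
      (List.range X.length).filter (q X) := by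
    apply List.filter_congr
    intro i hi
    have hi' : i < X.length := List.mem_range.mp hi
    rcases Nat.lt_or_ge (i+1) X.length with h | h
    · exact q_append_left Y h
    · have hiX : i + 1 = X.length := by omega
      have hq1 : q X i = false := q_false_of_ge (le_of_eq hiX.symm)
      rw [hq1]
      unfold q
      have e1 : (X ++ Y)[i]? = X[i]? := List.getElem?_append_left hi'
      have e2 : (X ++ Y)[i+1]? = Y[0]? := by
        rw [List.getElem?_append_right (by omega), hiX]
        simp
      rw [e1, e2]
      by_cases hx : X[i]? = some true
      · by_cases hy : Y[0]? = some true
        · exfalso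
          apply hjunc
          constructor
          · rw [List.getLast?_eq_getElem?]
            have : X.length - 1 = i := by omega
            rw [this]; exact hx
          · rw [List.head?_eq_getElem?]; exact hy
        · simp [hy]
      · simp [hx]
  have hfull : (List.range (X ++ Y).length).filter (q (X ++ Y)) =
      (List.range X.length).filter (q X) := by
    rw [filter_q_append, h2, hcongr]
    simp
  rw [ldr_spec, hfull, ldr_spec]
  cases hL : ((List.range X.length).filter (q X)).getLast? with
  | none => rfl
  | some i =>
      have hi : i ∈ (List.range X.length).filter (q X) := List.mem_of_getLast? hL
      have hilen : i < X.length := List.mem_range.mp (List.mem_filter.mp hi).1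
      simp only
      rw [List.take_append_of_le_length (by omega)]

end DyckSym

namespace DyckSym

lemma returns_nil : returns ([] : List Bool) = 0 := rfl

lemma returns_append {X : List Bool} (Y : List Bool)
    (h : X.count true = X.count false) :
    returns (X ++ Y) = returns X + returns Y := by
  rw [returns_spec, returns_spec, returns_spec,
    ← List.countP_eq_length_filter, ← List.countP_eq_length_filter,
    ← List.countP_eq_length_filter, List.length_append, List.range_add,
    List.countP_append, List.countP_map]
  congr 1
  · apply List.countP_congr
    intro i hi
    have hi' : i < X.length := List.mem_range.mp hi
    unfold rp
    rw [List.getElem?_append_left hi', List.take_append_of_le_length (by omega)]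
  · apply List.countP_congr
    intro j hj
    show rp (X ++ Y) (X.length + j) = true ↔ rp Y j = true
    unfold rp
    have h1 : (X ++ Y)[X.length + j]? = Y[j]? := by
      rw [List.getElem?_append_right (by omega)]
      congr 1
      omega
    have h2 : (X ++ Y).take (X.length + j + 1) = X ++ Y.take (j + 1) := by
      rw [show X.length + j + 1 = X.length + (j + 1) by omega, List.take_add,
        List.take_left, List.drop_left]
    rw [h1, h2, List.count_append, List.count_append, h]
    simp [Nat.add_right_inj]

lemma returns_prime {X : List Bool} (h : Dyk X) :
    returns (true :: X ++ [false]) = 1 := by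
  set D := true :: X ++ [false] with hD
  have hlen : D.length = X.length + 2 := by simp [hD]
  rw [returns_spec, ← List.countP_eq_length_filter, hlen,
    show X.length + 2 = (X.length + 1) + 1 by omega, List.range_succ,
    List.countP_append]
  have h1 : (List.range (X.length + 1)).countP (rp D) = 0 := by
    rw [List.countP_eq_zero]
    intro i hi
    have hi' : i < X.length + 1 := List.mem_range.mp hi
    unfold rp
    rcases Nat.eq_zero_or_pos i with h0 | hpos
    · subst h0
      have : D[0]? = some true := by simp [hD]
      simp [this]
    · have htake : D.take (i + 1) = true :: X.take i := by
        rw [hD]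
        have : (true :: X ++ [false]) = (true :: X) ++ [false] := by simp
        rw [this, List.take_append_of_le_length (by simp; omega)]
        rfl
      rw [htake]
      have hle := h.1 i
      simp only [Bool.and_eq_true, beq_iff_eq, not_and]
      intro _
      have hct : (true :: X.take i).count true = (X.take i).count true + 1 := by simp
      have hcf : (true :: X.take i).count false = (X.take i).count false := by simp
      rw [hct, hcf]
      omega
  have h2 : (List.countP (rp D) [X.length + 1]) = 1 := by
    have hel : D[X.length + 1]? = some false := by
      rw [hD, show (true :: X ++ [false]) = (true :: X) ++ [false] by simp,
        List.getElem?_append_right (by simp)]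
      simp
    have htake : D.take (X.length + 1 + 1) = D := List.take_of_length_le (by omega)
    have hcount : D.count true = D.count false := by
      simp [hD, List.count_cons, h.2]
    simp [List.countP_cons, rp, hel, htake, hcount]
  rw [h1, h2]

lemma Dyk_nil : Dyk ([] : List Bool) := ⟨fun k => by simp, by simp⟩

lemma Dyk_append {X Y : List Bool} (hX : Dyk X) (hY : Dyk Y) : Dyk (X ++ Y) := by
  constructor
  · intro k
    rcases le_or_gt k X.length with h | h
    · rw [List.take_append_of_le_length h]
      exact hX.1 k
    · have : (X ++ Y).take k = X ++ Y.take (k - X.length) := by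
        rw [show k = X.length + (k - X.length) by omega, List.take_add,
          List.take_left, List.drop_left]
        congr 2
        omega
      rw [this, List.count_append, List.count_append]
      have h1 := hX.1 X.length
      rw [List.take_length] at h1
      exact Nat.add_le_add h1 (hY.1 _)
  · simp [List.count_append, hX.2, hY.2]

lemma Dyk_prime {X : List Bool} (h : Dyk X) : Dyk (true :: X ++ [false]) := by
  constructor
  · intro k
    cases k with
    | zero => simp
    | succ k =>
        have : (true :: X ++ [false]).take (k+1) = true :: (X ++ [false]).take k := rfl
        rw [this]
        simp only [List.count_cons]
        rcases le_or_gt k X.length with hk | hk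
        · rw [List.take_append_of_le_length hk]
          have := h.1 k
          simp
          omega
        · rw [List.take_of_length_le (by simp; omega)]
          simp [List.count_append, h.2]
  · simp [List.count_cons, h.2]

end DyckSym

namespace DyckSym
open BT

def enc : BT → List Bool
  | .nil => []
  | .node a b => enc b ++ (true :: (enc a ++ [false]))

lemma enc_count_true (f : BT) : (enc f).count true = f.size := by
  induction f with
  | nil => rfl
  | node a b iha ihb => simp [enc, BT.size, List.count_append, iha, ihb]; omega

lemma enc_count_false (f : BT) : (enc f).count false = f.size := by
  induction f with
  | nil => rfl
  | node a b iha ihb => simp [enc, BT.size, List.count_append, iha, ihb]; omega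

lemma Dyk_enc (f : BT) : Dyk (enc f) := by
  induction f with
  | nil => exact Dyk_nil
  | node a b iha ihb => exact Dyk_append ihb (Dyk_prime iha)

lemma enc_ne_nil {f : BT} (h : f ≠ .nil) : enc f ≠ [] := by
  cases f with
  | nil => exact absurd rfl h
  | node a b => simp [enc]

lemma enc_getLast? {f : BT} (h : f ≠ .nil) : (enc f).getLast? = some false := by
  cases f with
  | nil => exact absurd rfl h
  | node a b =>
      have : enc (BT.node a b) = (enc b ++ (true :: enc a)) ++ [false] := by
        simp [enc]
      rw [this, List.getLast?_concat]

lemma enc_head? {f : BT} (h : f ≠ .nil) : (enc f).head? = some true := by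
  induction f with
  | nil => exact absurd rfl h
  | node a b _ ihb =>
      cases b with
      | nil => simp [enc]
      | node x y =>
          show (enc (BT.node x y) ++ _).head? = some true
          rw [List.head?_append_of_ne_nil _ (enc_ne_nil (by simp))]
          exact ihb (by simp)

lemma returns_enc (f : BT) : returns (enc f) = Rst f := by
  induction f with
  | nil => rfl
  | node a b iha ihb =>
      show returns (enc b ++ (true :: enc a ++ [false])) = _
      rw [returns_append _ (by rw [enc_count_true, enc_count_false]),
        returns_prime (Dyk_enc a), ihb]
      rfl

lemma hasUU_append_left {X : List Bool} (Y : List Bool) (h : HasUU X) :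
    HasUU (X ++ Y) := by
  obtain ⟨i, hi⟩ := h
  have h2 : X[i+1]? = some true := by
    unfold q at hi
    exact beq_iff_eq.mp (Bool.and_elim_right hi)
  have hlt : i + 1 < X.length := (List.getElem?_eq_some_iff.mp h2).1
  exact ⟨i, by rw [q_append_left Y hlt]; exact hi⟩

lemma hasUU_of_append_false {X : List Bool} (h : HasUU (X ++ [false])) :
    HasUU X := by
  obtain ⟨i, hi⟩ := h
  unfold q at hi
  have h1 := beq_iff_eq.mp (Bool.and_elim_left hi)
  have h2 := beq_iff_eq.mp (Bool.and_elim_right hi)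
  have hlt : i + 1 < X.length + 1 := by
    have := (List.getElem?_eq_some_iff.mp h2).1
    simpa using this
  have hlt2 : i + 1 ≠ X.length := by
    intro hc
    rw [List.getElem?_append_right (le_of_eq hc.symm), hc] at h2
    simp at h2
  rw [List.getElem?_append_left (by omega)] at h1
  rw [List.getElem?_append_left (by omega)] at h2
  refine ⟨i, ?_⟩
  unfold q
  rw [h1, h2]
  rfl

lemma noUU_TF : ¬ HasUU [true, false] := by
  rintro ⟨i, hi⟩
  unfold q at hi
  match i with
  | 0 => simp at hi
  | 1 => simp at hi
  | (n+2) => simp at hi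

lemma noUU_F : ¬ HasUU [false] := by
  rintro ⟨i, hi⟩
  unfold q at hi
  match i with
  | 0 => simp at hi
  | (n+1) => simp at hi

lemma ldr_enc (f : BT) : ldr (enc f) + Sst f = f.size := by
  induction f using Sst.induct with
  | case1 => simp [enc, Sst, BT.size, ldr]
  | case2 b ihb =>
      have hd : enc (BT.node .nil b) = enc b ++ [true, false] := by simp [enc]
      have hjunc : ¬ ((enc b).getLast? = some true ∧ ([true, false] : List Bool).head? = some true) := by
        rintro ⟨h1, _⟩
        cases b with
        | nil => simp [enc] at h1
        | node x y => rw [enc_getLast? (by simp)] at h1; simp at h1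
      rw [hd, ldr_append_none hjunc noUU_TF]
      simp only [Sst, BT.size]
      omega
  | case3 x y b ih =>
      have hd : enc (BT.node (BT.node x y) b) = enc b ++ (true :: (enc (BT.node x y) ++ [false])) := rfl
      have hhead : (enc (BT.node x y) ++ [false]).head? = some true := by
        rw [List.head?_append_of_ne_nil _ (enc_ne_nil (by simp))]
        exact enc_head? (by simp)
      have hY : HasUU (true :: (enc (BT.node x y) ++ [false])) := by
        refine ⟨0, ?_⟩
        unfold q
        have : (true :: (enc (BT.node x y) ++ [false]))[1]? = some true := by
          simpa [List.head?_eq_getElem?] using hhead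
        simp only [Nat.zero_add, this]
        simp
      rw [hd, ldr_append_hasUU _ hY]
      have hsplit : (true :: (enc (BT.node x y) ++ [false])) = [true] ++ (enc (BT.node x y) ++ [false]) := rfl
      have hct : List.count true [true] = 1 := rfl
      by_cases hU : HasUU (enc (BT.node x y))
      · have hUa : HasUU (enc (BT.node x y) ++ [false]) := hasUU_append_left _ hU
        rw [hsplit, ldr_append_hasUU _ hUa,
          ldr_append_none (by rintro ⟨_, h2⟩; simp at h2) noUU_F,
          hct, enc_count_true]
        simp only [Sst, BT.size] at ih ⊢
        omega
      · have hUa : ¬ HasUU (enc (BT.node x y) ++ [false]) := fun hc => hU (hasUU_of_append_false hc)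
        rw [hsplit, ldr_append_junction (show ([true] : List Bool).getLast? = some true by rfl) hhead hUa, hct, enc_count_true]
        have h0 : ldr (enc (BT.node x y)) = 0 := ldr_no_uu hU
        simp only [Sst, BT.size] at ih ⊢
        omega

end DyckSym

namespace DyckSym
open BT

def pstep : List BT → Bool → List BT
  | s, true => .nil :: s
  | c :: a :: s, false => (BT.node c a) :: s
  | s, false => s

def graft : BT → BT → BT
  | .nil, a => a
  | .node x y, a => .node x (graft y a)

lemma pstep_true (s : List BT) : pstep s true = .nil :: s := by
  match s with
  | [] => rfl
  | [c] => rfl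
  | c :: a :: t => rfl

lemma graft_nil (f : BT) : graft f .nil = f := by
  induction f with
  | nil => rfl
  | node x y _ ihy => simp [graft, ihy]

lemma enc_graft (f a : BT) : enc (graft f a) = enc a ++ enc f := by
  induction f with
  | nil => simp [graft, enc]
  | node x y _ ihy => simp [graft, enc, ihy]

lemma foldl_enc (f : BT) : ∀ (a : BT) (s : List BT),
    List.foldl pstep (a :: s) (enc f) = graft f a :: s := by
  induction f with
  | nil => intro a s; rfl
  | node x y ihx ihy =>
      intro a s
      have hsplit : enc (BT.node x y) = ((enc y ++ [true]) ++ enc x) ++ [false] := by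
        simp [enc]
      rw [hsplit, List.foldl_append, List.foldl_append, List.foldl_append, ihy]
      have h1 : List.foldl pstep (graft y a :: s) [true] = .nil :: graft y a :: s := by
        rw [List.foldl_cons, List.foldl_nil, pstep_true]
      rw [h1, ihx]
      show (BT.node (graft x .nil) (graft y a)) :: s = graft (BT.node x y) a :: s
      rw [graft_nil]
      rfl

def parse (D : List Bool) : BT :=
  match List.foldl pstep [.nil] D with
  | [f] => f
  | _ => .nil

lemma parse_enc (f : BT) : parse (enc f) = f := by
  have h := foldl_enc f .nil []
  rw [graft_nil] at h
  unfold parse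
  rw [h]

lemma isDyck_iff (D : List Bool) : isDyck D = true ↔ Dyk D := by
  unfold isDyck Dyk
  rw [Bool.and_eq_true, List.all_eq_true, beq_iff_eq]
  constructor
  · rintro ⟨h1, h2⟩
    refine ⟨fun k => ?_, h2⟩
    rcases le_or_gt k D.length with h | h
    · simpa using h1 k (List.mem_range.mpr (by omega))
    · rw [List.take_of_length_le (by omega)]
      have := h1 D.length (List.mem_range.mpr (by omega))
      simpa [List.take_length] using this
  · rintro ⟨h1, h2⟩
    exact ⟨fun k _ => by simpa using h1 k, h2⟩

lemma mem_dyckPaths {n : ℕ} {D : List Bool} :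
    D ∈ dyckPaths n ↔ Dyk D ∧ D.count true = n := by
  unfold dyckPaths
  rw [List.mem_toFinset, List.mem_filter, List.mem_permutations, isDyck_iff]
  have hct : (List.replicate n true ++ List.replicate n false).count true = n := by
    simp [List.count_append, List.count_replicate]
  have hcf : (List.replicate n true ++ List.replicate n false).count false = n := by
    simp [List.count_append, List.count_replicate]
  constructor
  · rintro ⟨hp, hd⟩
    exact ⟨hd, by rw [hp.count_eq true, hct]⟩
  · rintro ⟨hd, hn⟩
    refine ⟨List.perm_iff_count.mpr fun a => ?_, hd⟩
    cases a
    · rw [hcf, ← hd.2, hn]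
    · rw [hct, hn]

lemma dyk_decomp {D : List Bool} (hD : Dyk D) (hne : D ≠ []) :
    ∃ A B, Dyk A ∧ Dyk B ∧ D = true :: (A ++ false :: B) := by
  classical
  have hlen : 0 < D.length := List.length_pos_iff.mpr hne
  have hex : ∃ k, 0 < k ∧ (D.take k).count true = (D.take k).count false :=
    ⟨D.length, hlen, by rw [List.take_length]; exact hD.2⟩
  obtain ⟨hjpos, hjbal⟩ := Nat.find_spec hex
  set j := Nat.find hex with hjdef
  have hjle : j ≤ D.length :=
    Nat.find_min' hex ⟨hlen, by rw [List.take_length]; exact hD.2⟩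
  have f1 : ∀ k, 0 < k → k < j →
      (D.take k).count false < (D.take k).count true := by
    intro k hk hkj
    have hnb := Nat.find_min hex hkj
    have hle := hD.1 k
    rcases Nat.lt_or_ge ((D.take k).count false) ((D.take k).count true) with h | h
    · exact h
    · exact absurd ⟨hk, by omega⟩ hnb
  -- head is true
  obtain ⟨d, R, rfl⟩ : ∃ d R, D = d :: R := by
    cases D with
    | nil => exact absurd rfl hne
    | cons d R => exact ⟨d, R, rfl⟩
  have hd : d = true := by
    by_contra h
    have hdf : d = false := by cases d <;> simp_all
    subst hdf
    have := hD.1 1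
    simp [List.count_cons] at this
  subst hd
  have hj2 : 2 ≤ j := by
    by_contra h
    have hj1 : j = 1 := by omega
    rw [hj1] at hjbal
    simp [List.count_cons] at hjbal
  -- element at j-1 is false
  have hstep : (true :: R).take j = (true :: R).take (j-1) ++ ((true :: R)[j-1]?).toList := by
    rw [← List.take_succ, show j - 1 + 1 = j by omega]
  have hel : ∃ e, (true :: R)[j-1]? = some e := by
    have : j - 1 < (true :: R).length := by omega
    exact ⟨_, List.getElem?_eq_getElem this⟩
  obtain ⟨e, he⟩ := hel
  have hbal1 := f1 (j-1) (by omega) (by omega)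
  have hef : e = false := by
    by_contra h
    have het : e = true := by cases e <;> simp_all
    subst het
    rw [hstep, he] at hjbal
    simp [List.count_append] at hjbal
    omega
  subst hef
  have hcnt : ((true :: R).take (j-1)).count true = ((true :: R).take (j-1)).count false + 1 := by
    rw [hstep, he] at hjbal
    simp [List.count_append] at hjbal
    omega
  have htk : (true :: R).take (j-1) = true :: R.take (j-2) := by
    rw [show j - 1 = (j-2) + 1 by omega, List.take_succ_cons]
  have hAbal : (R.take (j-2)).count true = (R.take (j-2)).count false := by
    rw [htk] at hcnt
    simp [List.count_cons] at hcnt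
    omega
  -- define A and B
  refine ⟨R.take (j-2), (true :: R).drop j, ?_, ?_, ?_⟩
  · -- Dyk A
    refine ⟨fun k => ?_, hAbal⟩
    rcases le_or_gt (j-2) k with h | h
    · rw [List.take_of_length_le (le_trans (List.length_take_le _ _) h)]
      exact le_of_eq hAbal.symm
    · rw [List.take_take, min_eq_left (by omega)]
      have hf := f1 (k+1) (by omega) (by omega)
      have : (true :: R).take (k+1) = true :: R.take k := List.take_succ_cons
      rw [this] at hf
      simp [List.count_cons] at hf
      omega
  · -- Dyk B
    refine ⟨fun k => ?_, ?_⟩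
    · have h1 := hD.1 (j + k)
      rw [List.take_add] at h1
      rw [List.count_append, List.count_append] at h1
      omega
    · have h1 := hD.2
      conv_lhs at h1 => rw [← List.take_append_drop j (true :: R)]
      conv_rhs at h1 => rw [← List.take_append_drop j (true :: R)]
      rw [List.count_append, List.count_append] at h1
      omega
  · -- the decomposition equation
    obtain ⟨hlt, hgetel⟩ := List.getElem?_eq_some_iff.mp he
    have hdrop : (true :: R).drop (j-1) = false :: (true :: R).drop j := by
      rw [List.drop_eq_getElem_cons hlt, hgetel, show j - 1 + 1 = j by omega]
    conv_lhs => rw [← List.take_append_drop (j-1) (true :: R)]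
    rw [htk, hdrop]
    simp

end DyckSym

namespace DyckSym
open BT

lemma exists_enc : ∀ (N : ℕ) (D : List Bool), D.length ≤ N → Dyk D →
    ∃ f : BT, enc f = D := by
  intro N
  induction N with
  | zero =>
      intro D h _
      have : D = [] := List.eq_nil_of_length_eq_zero (by omega)
      exact ⟨.nil, by rw [this]; rfl⟩
  | succ N ih =>
      intro D h hD
      by_cases hne : D = []
      · exact ⟨.nil, by rw [hne]; rfl⟩
      · obtain ⟨A, B, hA, hB, hEq⟩ := dyk_decomp hD hne
        have hlenD : D.length = A.length + B.length + 2 := by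
          rw [hEq]; simp; omega
        obtain ⟨fA, hfA⟩ := ih A (by omega) hA
        obtain ⟨fB, hfB⟩ := ih B (by omega) hB
        refine ⟨graft fB (.node fA .nil), ?_⟩
        rw [enc_graft, hEq, ← hfA, ← hfB]
        show ([] ++ (true :: (enc fA ++ [false]))) ++ enc fB = _
        simp

/-- The key correspondence for a Dyck path. -/
lemma main_step {n a b : ℕ} {D : List Bool}
    (hD : D ∈ (dyckPaths n).filter fun D => returns D = a ∧ n - ldr D = b) :
    (enc (BT.psi (parse D)) ∈
      (dyckPaths n).filter fun D => returns D = b ∧ n - ldr D = a) ∧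
    enc (BT.psi (parse (enc (BT.psi (parse D))))) = D := by
  rw [Finset.mem_filter] at hD
  obtain ⟨hmem, hret, hldr⟩ := hD
  rw [mem_dyckPaths] at hmem
  obtain ⟨hDyk, hcount⟩ := hmem
  obtain ⟨f, hf⟩ := exists_enc D.length D le_rfl hDyk
  have hparse : parse D = f := by rw [← hf, parse_enc]
  have hsize : f.size = n := by rw [← enc_count_true, hf, hcount]
  have hR : Rst f = a := by rw [← returns_enc, hf, hret]
  have hldr2 := ldr_enc f
  have hldr3 : ldr D ≤ n := by
    rw [← hcount]
    exact ldr_le_count D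
  have hS : Sst f = b := by
    rw [hf] at hldr2
    omega
  rw [hparse]
  constructor
  · rw [Finset.mem_filter, mem_dyckPaths]
    have h1 := ldr_enc (BT.psi f)
    have h2 : Sst (BT.psi f) = a := by rw [BT.psi_Sst, hR]
    have h3 : (BT.psi f).size = n := by rw [BT.psi_size, hsize]
    refine ⟨⟨Dyk_enc _, by rw [enc_count_true, h3]⟩, ?_, ?_⟩
    · rw [returns_enc, BT.psi_Rst, hS]
    · omega
  · rw [parse_enc, BT.psi_psi, hf]

end DyckSym


/-- The joint distribution of `(returns D, n - ldr D)` over Dyck paths of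
semilength `n` is symmetric. -/
theorem stmt1 (n a b : ℕ) :
    ((dyckPaths n).filter fun D => returns D = a ∧ n - ldr D = b).card =
    ((dyckPaths n).filter fun D => returns D = b ∧ n - ldr D = a).card := by
  classical
  apply Finset.card_bij'
    (i := fun D _ => DyckSym.enc (BT.psi (DyckSym.parse D)))
    (j := fun D _ => DyckSym.enc (BT.psi (DyckSym.parse D)))
  · intro D hD
    exact (DyckSym.main_step hD).1
  · intro D hD
    exact (DyckSym.main_step hD).1
  · intro D hD
    exact (DyckSym.main_step hD).2
  · intro D hD
    exact (DyckSym.main_step hD).2
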